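/- Let α be an irrational real with continued fraction convergents p_n/q_n and partial quotients a_n. Then μ(α) = 1 + limsup_{n→∞} (ln q_{n+1})/(ln q_n) = 2 + limsup_{n→∞} (ln a_{n+1})/(ln q_n). -/

import Mathlib

open scoped ENNReal

/-- The irrationality exponent of a real number `α`:
the supremum of exponents `ν` such that `|α - p/q| < 1/q^ν` has infinitely many
integer solutions `(p, q)` with `q ≥ 1`. -/
noncomputable def irrExp (α : ℝ) : ℝ≥0∞ :=
  sSup {m : ℝ≥0∞ | ∃ ν : ℝ, m = ENNReal.ofReal ν ∧
    {pq : ℤ × ℤ | 1 ≤ pq.2 ∧ |α - (pq.1 : ℝ) / (pq.2 : ℝ)| < 1 / (pq.2 : ℝ) ^ ν}.Infinite}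

open Filter in
private lemma limsup_add_const_ennreal' (v : ℕ → ℝ≥0∞) (c : ℝ≥0∞) :
    limsup (fun n => v n + c) atTop = limsup v atTop + c :=
  limsup_add_const atTop v c isBounded_le_of_top isCobounded_le_of_bot

private lemma abs_le_abs_add_of_mul_nonneg' {u v : ℝ} (h : 0 ≤ u * v) : |u| ≤ |u + v| := by
  rcases le_or_gt 0 u with h1 | h1 <;> rcases le_or_gt 0 v with h2 | h2
  · rw [abs_of_nonneg h1, abs_of_nonneg (by linarith)]; linarith
  · have hu : u = 0 := le_antisymm (by nlinarith) h1
    simp [hu]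
  · have hv : v = 0 := le_antisymm (by nlinarith) h2
    simp [hv]
  · rw [abs_of_neg h1, abs_of_neg (by linarith)]; linarith

set_option maxHeartbeats 1000000 in
open Filter in
/-- If `α` is irrational with continued fraction partial quotients `a n` (for `n ≥ 1`,
`a 0 = ⌊α⌋`), convergents `p n / q n` (characterized by the standard recursions and the
convergence of `p n / q n` to `α`), then
`μ(α) = 1 + limsup (ln q (n+1) / ln q n) = 2 + limsup (ln a (n+1) / ln q n)`. -/
theorem stmt_2 (α : ℝ) (hα : Irrational α) (a p q : ℕ → ℤ)
    (ha : ∀ n, 1 ≤ n → 1 ≤ a n)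
    (hp0 : p 0 = a 0) (hp1 : p 1 = a 1 * a 0 + 1)
    (hq0 : q 0 = 1) (hq1 : q 1 = a 1)
    (hp : ∀ n, p (n + 2) = a (n + 2) * p (n + 1) + p n)
    (hq : ∀ n, q (n + 2) = a (n + 2) * q (n + 1) + q n)
    (hlim : Tendsto (fun n => (p n : ℝ) / (q n : ℝ)) atTop (nhds α)) :
    irrExp α =
        1 + limsup (fun n => ENNReal.ofReal (Real.log (q (n + 1)) / Real.log (q n))) atTop ∧
      irrExp α =
        2 + limsup (fun n => ENNReal.ofReal (Real.log (a (n + 1)) / Real.log (q n))) atTop := by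

  -- basic positivity
  have key : ∀ n, 1 ≤ q n ∧ 1 ≤ q (n+1) := by
    intro n
    induction n with
    | zero => exact ⟨by omega, by rw [hq1]; exact ha 1 le_rfl⟩
    | succ n ih =>
      refine ⟨ih.2, ?_⟩
      have h1 := ha (n+2) (by omega)
      have := ih.1; have := ih.2
      rw [hq n]; nlinarith
  have hq1' : ∀ n, 1 ≤ q n := fun n => (key n).1
  have hqmono : ∀ n, q n ≤ q (n+1) := by
    intro n
    match n with
    | 0 => rw [hq0, hq1]; exact ha 1 le_rfl
    | Nat.succ m =>
      have h1 := ha (m+2) (by omega)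
      have := hq1' m; have := hq1' (m+1)
      rw [hq m]; nlinarith
  have hqstrict : ∀ n, 1 ≤ n → q n < q (n+1) := by
    intro n hn
    match n, hn with
    | Nat.succ m, _ =>
      have h1 := ha (m+2) (by omega)
      have := hq1' m; have := hq1' (m+1)
      rw [hq m]; nlinarith
  have hqmono' : ∀ m n, m ≤ n → q m ≤ q n := by
    intro m n hmn
    induction n, hmn using Nat.le_induction with
    | base => exact le_rfl
    | succ n hmn ih => exact ih.trans (hqmono n)
  have hqlt : ∀ m n, 1 ≤ m → m < n → q m < q n := by
    intro m n hm hmn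
    calc q m < q (m+1) := hqstrict m hm
    _ ≤ q n := hqmono' _ _ hmn
  have hqn : ∀ n : ℕ, (n : ℤ) ≤ q n := by
    have key2 : ∀ n : ℕ, (n+1 : ℤ) ≤ q (n+1) := by
      intro n
      induction n with
      | zero => simpa [hq1] using ha 1 le_rfl
      | succ n ih =>
        have := hq1' n
        rw [hq n]
        have h1 := ha (n+2) (by omega)
        have := hq1' (n+1)
        push_cast
        nlinarith
    intro n
    match n with
    | 0 => simp [hq0]
    | Nat.succ m => exact_mod_cast key2 m
  -- determinant
  have hd : ∀ n, p (n+1) * q n - p n * q (n+1) = (-1)^n := by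
    intro n
    induction n with
    | zero => rw [hp0, hp1, hq0, hq1]; ring
    | succ n ih =>
      rw [hp n, hq n, pow_succ]
      linear_combination (-1 : ℤ) * ih

  set f : ℕ → ℝ := fun n => (p n : ℝ) / (q n : ℝ) with hf
  have hQpos : ∀ n, (0:ℝ) < (q n : ℝ) := fun n => by exact_mod_cast hq1' n
  have hQ1 : ∀ n, (1:ℝ) ≤ (q n : ℝ) := fun n => by exact_mod_cast hq1' n
  have hdiff : ∀ n, f (n+1) - f n = (-1)^n / ((q n : ℝ) * (q (n+1) : ℝ)) := by
    intro n
    have h := hd n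
    have h1 := (hQpos n).ne'
    have h2 := (hQpos (n+1)).ne'
    have hR : ((p (n+1) : ℤ) : ℝ) * (q n : ℝ) - (p n : ℝ) * (q (n+1) : ℝ) = (-1)^n := by
      exact_mod_cast congrArg (Int.cast : ℤ → ℝ) h
    simp only [hf]; rw [div_sub_div _ _ h2 h1, div_eq_div_iff (mul_ne_zero h2 h1) (mul_ne_zero h1 h2)]
    linear_combination ((q n : ℝ) * (q (n+1) : ℝ)) * hR
  have hd2 : ∀ n, p (n+2) * q n - p n * q (n+2) = (-1)^n * a (n+2) := by
    intro n
    rw [hp n, hq n]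
    linear_combination (a (n+2)) * hd n
  have hdiff2 : ∀ n, f (n+2) - f n = (-1)^n * (a (n+2) : ℝ) / ((q n : ℝ) * (q (n+2) : ℝ)) := by
    intro n
    have h := hd2 n
    have h1 := (hQpos n).ne'
    have h2 := (hQpos (n+2)).ne'
    have hR : ((p (n+2) : ℤ) : ℝ) * (q n : ℝ) - (p n : ℝ) * (q (n+2) : ℝ) = (-1)^n * (a (n+2) : ℝ) := by
      exact_mod_cast congrArg (Int.cast : ℤ → ℝ) h
    simp only [hf]; rw [div_sub_div _ _ h2 h1, div_eq_div_iff (mul_ne_zero h2 h1) (mul_ne_zero h1 h2)]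
    linear_combination ((q n : ℝ) * (q (n+2) : ℝ)) * hR
  -- even/odd subsequences
  have haR : ∀ n, 1 ≤ n → (1:ℝ) ≤ (a n : ℝ) := fun n hn => by exact_mod_cast ha n hn
  have heven : StrictMono (fun k => f (2*k)) := by
    refine strictMono_nat_of_lt_succ fun k => ?_
    have h := hdiff2 (2*k)
    have : f (2*k+2) - f (2*k) = (a (2*k+2) : ℝ) / ((q (2*k) : ℝ) * (q (2*k+2) : ℝ)) := by
      rw [h, pow_mul]; norm_num
    have hpos : (0:ℝ) < (a (2*k+2) : ℝ) / ((q (2*k) : ℝ) * (q (2*k+2) : ℝ)) := by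
      apply div_pos (by linarith [haR (2*k+2) (by omega)]) (by nlinarith [hQpos (2*k), hQpos (2*k+2)])
    have h2 : (2*(k+1)) = 2*k+2 := by ring
    rw [h2]; linarith
  have hodd : StrictAnti (fun k => f (2*k+1)) := by
    refine strictAnti_nat_of_succ_lt fun k => ?_
    have h := hdiff2 (2*k+1)
    have : f (2*k+3) - f (2*k+1) = -((a (2*k+3) : ℝ) / ((q (2*k+1) : ℝ) * (q (2*k+3) : ℝ))) := by
      rw [h, pow_succ, pow_mul]; ring_nf
    have hpos : (0:ℝ) < (a (2*k+3) : ℝ) / ((q (2*k+1) : ℝ) * (q (2*k+3) : ℝ)) := by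
      apply div_pos (by linarith [haR (2*k+3) (by omega)]) (by nlinarith [hQpos (2*k+1), hQpos (2*k+3)])
    have h2 : (2*(k+1)+1) = 2*k+3 := by ring
    rw [h2]; linarith
  have h2k : Tendsto (fun k : ℕ => 2*k) atTop atTop := by
    apply tendsto_atTop_atTop_of_monotone (fun i j h => by omega)
    intro b; exact ⟨b, by omega⟩
  have h2k1 : Tendsto (fun k : ℕ => 2*k+1) atTop atTop := by
    apply tendsto_atTop_atTop_of_monotone (fun i j h => by omega)
    intro b; exact ⟨b, by omega⟩
  have hevlim : Tendsto (fun k => f (2*k)) atTop (nhds α) := hlim.comp h2k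
  have hodlim : Tendsto (fun k => f (2*k+1)) atTop (nhds α) := hlim.comp h2k1
  have hfe_lt : ∀ k, f (2*k) < α := by
    intro k
    have h1 : f (2*k) < f (2*(k+1)) := heven (by omega)
    have h2 : f (2*(k+1)) ≤ α := heven.monotone.ge_of_tendsto hevlim (k+1)
    linarith
  have hfo_gt : ∀ k, α < f (2*k+1) := by
    intro k
    have h1 : f (2*(k+1)+1) < f (2*k+1) := hodd (by omega)
    have h2 : α ≤ f (2*(k+1)+1) := hodd.antitone.le_of_tendsto hodlim (k+1)
    linarith
  have hQQ : ∀ n, (0:ℝ) < (q n : ℝ) * (q (n+1) : ℝ) :=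
    fun n => mul_pos (hQpos n) (hQpos (n+1))
  have hqR : ∀ n, (q (n+2) : ℝ) = (a (n+2) : ℝ) * (q (n+1) : ℝ) + (q n : ℝ) := by
    intro n; exact_mod_cast congrArg (Int.cast : ℤ → ℝ) (hq n)
  have hQmonoR : ∀ n, (q n : ℝ) ≤ (q (n+1) : ℝ) := fun n => by exact_mod_cast hqmono n
  -- upper bound
  have hflt : ∀ n, |α - f n| < 1/((q n : ℝ) * (q (n+1) : ℝ)) := by
    intro n
    rcases Nat.even_or_odd n with he | ho
    · obtain ⟨k, hk⟩ := he
      have hn : n = 2*k := by omega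
      have h1 : f n < α := by rw [hn]; exact hfe_lt k
      have h2 : α < f (n+1) := by
        have : n+1 = 2*k+1 := by omega
        rw [this]; exact hfo_gt k
      have h3 : f (n+1) - f n = 1/((q n : ℝ) * (q (n+1) : ℝ)) := by
        rw [hdiff n, Even.neg_one_pow ⟨k, by omega⟩]
      rw [abs_of_pos (by linarith)]
      linarith
    · obtain ⟨k, hk⟩ := ho
      have h1 : α < f n := by rw [hk]; exact hfo_gt k
      have h2 : f (n+1) < α := by
        have : n+1 = 2*(k+1) := by omega
        rw [this]; exact hfe_lt (k+1)
      have h3 : f (n+1) - f n = -(1/((q n : ℝ) * (q (n+1) : ℝ))) := by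
        rw [hdiff n, Odd.neg_one_pow ⟨k, by omega⟩]; ring
      rw [abs_of_neg (by linarith)]
      linarith
  -- lower bound
  have hq2le : ∀ n, (q (n+2) : ℝ) ≤ 2 * (a (n+2) : ℝ) * (q (n+1) : ℝ) := by
    intro n
    have h1 := haR (n+2) (by omega)
    have h2 := hQmonoR n
    have h3 := hQpos (n+1)
    rw [hqR n]; nlinarith
  have hmid : ∀ n, 1/(2*((q n : ℝ) * (q (n+1) : ℝ))) ≤ (a (n+2) : ℝ) / ((q n : ℝ) * (q (n+2) : ℝ)) := by
    intro n
    rw [div_le_div_iff₀ (by nlinarith [hQQ n]) (by nlinarith [hQpos n, hQpos (n+2)])]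
    have := hq2le n
    have := hQpos n
    have := hQpos (n+1)
    have h1 := haR (n+2) (by omega)
    nlinarith
  have hfgt : ∀ n, 1/(2*((q n : ℝ) * (q (n+1) : ℝ))) < |α - f n| := by
    intro n
    rcases Nat.even_or_odd n with he | ho
    · obtain ⟨k, hk⟩ := he
      have hn : n = 2*k := by omega
      have h1 : f n < α := by rw [hn]; exact hfe_lt k
      have h2 : f (n+2) < α := by
        have : n+2 = 2*(k+1) := by omega
        rw [this]; exact hfe_lt (k+1)
      have h3 : f (n+2) - f n = (a (n+2) : ℝ) / ((q n : ℝ) * (q (n+2) : ℝ)) := by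
        rw [hdiff2 n, Even.neg_one_pow ⟨k, by omega⟩]; ring
      rw [abs_of_pos (by linarith)]
      have := hmid n
      linarith
    · obtain ⟨k, hk⟩ := ho
      have h1 : α < f n := by rw [hk]; exact hfo_gt k
      have h2 : α < f (n+2) := by
        have : n+2 = 2*(k+1)+1 := by omega
        rw [this]; exact hfo_gt (k+1)
      have h3 : f (n+2) - f n = -((a (n+2) : ℝ) / ((q n : ℝ) * (q (n+2) : ℝ))) := by
        rw [hdiff2 n, Odd.neg_one_pow ⟨k, by omega⟩]; ring
      rw [abs_of_neg (by linarith)]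
      have := hmid n
      linarith
  -- signs
  have hsign : ∀ n, 0 < (-1:ℝ)^n * (α - f n) := by
    intro n
    rcases Nat.even_or_odd n with he | ho
    · obtain ⟨k, hk⟩ := he
      have hn : n = 2*k := by omega
      rw [Even.neg_one_pow ⟨k, by omega⟩, one_mul, hn]
      have := hfe_lt k; linarith
    · obtain ⟨k, hk⟩ := ho
      rw [Odd.neg_one_pow ⟨k, by omega⟩]
      have : α < f n := by rw [hk]; exact hfo_gt k
      nlinarith

  -- squeeze: q n ≥ 2 for n ≥ 2
  have hq2' : ∀ n, 2 ≤ n → 2 ≤ q n := by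
    intro n hn
    have h2 : 2 ≤ q 2 := by
      have h := hq 0
      have h1 := ha 2 (by omega)
      have h2 := hq1' 1
      rw [hq0] at h
      nlinarith
    exact le_trans h2 (hqmono' 2 n hn)
  have hlogpos : ∀ n, 2 ≤ n → 0 < Real.log (q n) := by
    intro n hn
    have : (2:ℝ) ≤ (q n : ℝ) := by exact_mod_cast hq2' n hn
    exact Real.log_pos (by linarith)
  -- e_n sign and size
  have hqαp : ∀ n, (q n : ℝ)*α - (p n : ℝ) = (q n : ℝ) * (α - f n) := by
    intro n
    have h := (hQpos n).ne'
    field_simp [hf]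
    simp only [hf]; field_simp
  have hesign : ∀ n, 0 < (-1:ℝ)^n * ((q n : ℝ)*α - (p n : ℝ)) := by
    intro n
    rw [hqαp n]
    have h1 := hsign n
    have h2 := hQpos n
    nlinarith
  have he_lb : ∀ n, 1/(2*(q (n+1) : ℝ)) < |(q n : ℝ)*α - (p n : ℝ)| := by
    intro n
    rw [hqαp n, abs_mul, abs_of_pos (hQpos n)]
    have h1 := hfgt n
    have h2a : (0:ℝ) < 2*((q n : ℝ) * (q (n+1) : ℝ)) := by nlinarith [hQQ n]
    have h2b : (0:ℝ) < 2*(q (n+1) : ℝ) := by nlinarith [hQpos (n+1)]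
    have h2 : (q n : ℝ) * (1/(2*((q n : ℝ) * (q (n+1) : ℝ)))) = 1/(2*(q (n+1) : ℝ)) := by
      rw [mul_one_div, div_eq_div_iff h2a.ne' h2b.ne']
      ring
    rw [← h2]
    exact mul_lt_mul_of_pos_left h1 (hQpos n)
  -- best approximation property
  have hbest : ∀ (n : ℕ) (P Q : ℤ), 1 ≤ Q → Q < q (n+1) →
      |(q n : ℝ)*α - (p n : ℝ)| ≤ |(Q : ℝ)*α - (P : ℝ)| := by
      intro n P Q hQ hQlt
      set x : ℤ := (-1)^n * (Q * p (n+1) - P * q (n+1)) with hxdef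
      set y : ℤ := (-1)^n * (P * q n - Q * p n) with hydef
      have hsq : ((-1:ℤ)^n) * ((-1)^n) = 1 := by rw [← mul_pow]; norm_num
      have hxq : x * q n + y * q (n+1) = Q := by
        rw [hxdef, hydef]; linear_combination ((-1:ℤ)^n * Q) * hd n + Q * hsq
      have hxp : x * p n + y * p (n+1) = P := by
        rw [hxdef, hydef]; linear_combination ((-1:ℤ)^n * P) * hd n + P * hsq
      set en : ℝ := (q n : ℝ)*α - (p n : ℝ) with hen
      set en1 : ℝ := (q (n+1) : ℝ)*α - (p (n+1) : ℝ) with hen1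
      have hlin : (Q : ℝ)*α - (P : ℝ) = (x : ℝ) * en + (y : ℝ) * en1 := by
        have h1 : ((x : ℝ) * (q n : ℝ) + (y : ℝ) * (q (n+1) : ℝ)) = (Q : ℝ) := by
          exact_mod_cast congrArg (Int.cast : ℤ → ℝ) hxq
        have h2 : ((x : ℝ) * (p n : ℝ) + (y : ℝ) * (p (n+1) : ℝ)) = (P : ℝ) := by
          exact_mod_cast congrArg (Int.cast : ℤ → ℝ) hxp
        rw [hen, hen1]; linear_combination (-α) * h1 + h2
      by_cases hy0 : y = 0
      · have hxq' : x * q n = Q := by rw [hy0] at hxq; simpa using hxq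
        have hx1 : 1 ≤ x := by nlinarith [hq1' n]
        have hx1R : (1:ℝ) ≤ (x:ℝ) := by exact_mod_cast hx1
        have hlin' : (Q : ℝ)*α - (P : ℝ) = (x : ℝ) * en := by rw [hlin, hy0]; push_cast; ring
        rw [hlin', abs_mul, abs_of_nonneg (by linarith : (0:ℝ) ≤ (x:ℝ))]
        nlinarith [abs_nonneg en]
      · by_cases hx0 : x = 0
        · exfalso
          have hxq' : y * q (n+1) = Q := by rw [hx0] at hxq; simpa using hxq
          have hy1 : 1 ≤ y := by nlinarith [hq1' (n+1)]
          nlinarith [hq1' (n+1)]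
        · have hxy : x * y < 0 := by
            rcases Ne.lt_or_gt hy0 with hyneg | hypos
            · have hxpos : 0 < x := by nlinarith [hq1' n, hq1' (n+1)]
              nlinarith
            · have hxneg : x < 0 := by nlinarith [hq1' n, hq1' (n+1)]
              nlinarith
          have hee : en * en1 < 0 := by
            have h1 := hesign n
            have h2 := hesign (n+1)
            simp only [← hen, ← hen1] at h1 h2
            rcases Nat.even_or_odd n with he | ho
            · rw [Even.neg_one_pow he, one_mul] at h1
              rw [Odd.neg_one_pow (Even.add_one he), neg_one_mul] at h2
              nlinarith
            · rw [Odd.neg_one_pow ho, neg_one_mul] at h1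
              rw [Even.neg_one_pow (Odd.add_one ho), one_mul] at h2
              nlinarith
          have hxyR : (x:ℝ) * (y:ℝ) < 0 := by exact_mod_cast hxy
          have huv : 0 ≤ ((x:ℝ) * en) * ((y:ℝ) * en1) := by nlinarith
          have h5 : |(x:ℝ) * en| ≤ |(x:ℝ) * en + (y:ℝ) * en1| := abs_le_abs_add_of_mul_nonneg' huv
          have hx1R : (1:ℝ) ≤ |(x:ℝ)| := by
            rw [← Int.cast_abs]; exact_mod_cast Int.one_le_abs hx0
          rw [hlin]
          calc |en| ≤ |(x:ℝ)| * |en| := by nlinarith [abs_nonneg en]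
          _ = |(x:ℝ) * en| := (abs_mul _ _).symm
          _ ≤ _ := h5
  -- tendsto of logs
  have hqtend : Tendsto (fun n => (q n : ℝ)) atTop atTop := by
    apply tendsto_atTop_mono (fun n => ?_) tendsto_natCast_atTop_atTop
    exact_mod_cast hqn n
  have htendlog : Tendsto (fun n => Real.log (q n)) atTop atTop :=
    Real.tendsto_log_atTop.comp hqtend
  -- limsup is at least 1
  have hL1 : 1 ≤ limsup (fun n => ENNReal.ofReal (Real.log (q (n + 1)) / Real.log (q n))) atTop := by
    have hev : ∀ᶠ n in atTop, (1:ℝ≥0∞) ≤ ENNReal.ofReal (Real.log (q (n + 1)) / Real.log (q n)) := by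
      filter_upwards [eventually_ge_atTop 2] with n hn
      have hlog := hlogpos n hn
      have hle : Real.log (q n) ≤ Real.log (q (n+1)) :=
        Real.log_le_log (hQpos n) (hQmonoR n)
      have hr1 : 1 ≤ Real.log (q (n + 1)) / Real.log (q n) := (one_le_div hlog).mpr hle
      calc (1:ℝ≥0∞) = ENNReal.ofReal 1 := ENNReal.ofReal_one.symm
        _ ≤ _ := ENNReal.ofReal_le_ofReal hr1
    exact le_limsup_of_frequently_le hev.frequently
  -- upper bound
  have part1 : irrExp α ≤
      1 + limsup (fun n => ENNReal.ofReal (Real.log (q (n + 1)) / Real.log (q n))) atTop := by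
      set r : ℕ → ℝ := fun n => Real.log (q (n + 1)) / Real.log (q n) with hrdef
      set L := limsup (fun n => ENNReal.ofReal (r n)) atTop with hL
      have hQpos : ∀ n, (0:ℝ) < (q n : ℝ) := fun n => by exact_mod_cast hq1' n
      have hQ1 : ∀ n, (1:ℝ) ≤ (q n : ℝ) := fun n => by exact_mod_cast hq1' n
      have hlogpos : ∀ n, 2 ≤ n → 0 < Real.log (q n) := by
        intro n hn
        have : (2:ℝ) ≤ (q n : ℝ) := by exact_mod_cast hq2' n hn
        exact Real.log_pos (by linarith)
      have hfind : ∀ Q : ℤ, 1 ≤ Q → ∃ n, q n ≤ Q ∧ Q < q (n+1) := by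
        intro Q hQ
        have hex : ∃ m : ℕ, Q < q m := by
          refine ⟨Q.toNat + 1, lt_of_lt_of_le ?_ (hqn (Q.toNat + 1))⟩
          push_cast; omega
        obtain ⟨k, hk⟩ : ∃ k, Nat.find hex = k + 1 := by
          have h0 : Nat.find hex ≠ 0 := by
            intro h
            have := Nat.find_spec hex
            rw [h, hq0] at this; omega
          exact ⟨Nat.find hex - 1, by omega⟩
        refine ⟨k, ?_, ?_⟩
        · have := Nat.find_min hex (m := k) (by omega)
          omega
        · have := Nat.find_spec hex
          rwa [hk] at this
      apply sSup_le
      rintro m ⟨ν, rfl, hinf⟩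
      rcases le_or_gt ν 2 with hν2 | hν2
      · calc ENNReal.ofReal ν ≤ ENNReal.ofReal 2 := ENNReal.ofReal_le_ofReal hν2
          _ = 1 + 1 := by norm_num
          _ ≤ 1 + L := by exact add_le_add le_rfl hL1
      by_contra hcon
      push_neg at hcon
      -- extract real limsup
      have hLne : L ≠ ⊤ := by
        intro h
        rw [h] at hcon
        simp at hcon
      set l := L.toReal with hl
      have hlL : ENNReal.ofReal l = L := ENNReal.ofReal_toReal hLne
      have hl0 : 0 ≤ l := ENNReal.toReal_nonneg
      have h1l : 1 + l < ν := by
        have h1 : ENNReal.ofReal (1 + l) = 1 + L := by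
          rw [ENNReal.ofReal_add (by norm_num) hl0, ENNReal.ofReal_one, hlL]
        have h2 : ENNReal.ofReal (1 + l) < ENNReal.ofReal ν := by rw [h1]; exact hcon
        exact (ENNReal.ofReal_lt_ofReal_iff_of_nonneg (by linarith)).mp h2
      set δ := (ν - 1 - l)/2 with hδ
      have hδpos : 0 < δ := by rw [hδ]; linarith
      set c := l + δ with hc
      have hcpos : 0 < c := by positivity
      have hLc : L < ENNReal.ofReal c := by
        rw [← hlL]
        exact (ENNReal.ofReal_lt_ofReal_iff hcpos).mpr (by rw [hc]; linarith)
      have hev : ∀ᶠ n in atTop, ENNReal.ofReal (r n) < ENNReal.ofReal c :=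
        eventually_lt_of_limsup_lt hLc
      have hev2 : ∀ᶠ n in atTop, (2 ≤ n ∧ r n < c) := by
        filter_upwards [hev, eventually_ge_atTop 2] with n h1 h2
        exact ⟨h2, (ENNReal.ofReal_lt_ofReal_iff hcpos).mp h1⟩
      obtain ⟨N, hN⟩ := eventually_atTop.mp hev2
      -- eventual bound q (n+1) < q n ^ c
      have hqc : ∀ n, N ≤ n → (q (n+1) : ℝ) < ((q n : ℝ)) ^ c := by
        intro n hn
        obtain ⟨hn2, hnr⟩ := hN n hn
        have hlog := hlogpos n hn2
        have h1 : Real.log (q (n+1)) < c * Real.log (q n) := by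
          rw [hrdef] at hnr
          have := (div_lt_iff₀ hlog).mp hnr
          linarith
        rw [Real.rpow_def_of_pos (hQpos n)]
        calc (q (n+1) : ℝ) = Real.exp (Real.log (q (n+1))) := (Real.exp_log (hQpos (n+1))).symm
          _ < Real.exp (Real.log (q n) * c) := by apply Real.exp_lt_exp.mpr; linarith
      -- choose a big solution
      set K : ℤ := ⌈(2:ℝ) ^ (1/δ)⌉ with hK
      set B : ℤ := max (q N) K with hB
      have hBQ : ∃ pq : ℤ × ℤ, pq ∈ {pq : ℤ × ℤ | 1 ≤ pq.2 ∧
          |α - (pq.1 : ℝ) / (pq.2 : ℝ)| < 1 / (pq.2 : ℝ) ^ ν} ∧ B < pq.2 := by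
        by_contra hno
        push_neg at hno
        set M : ℤ := ⌈(B:ℝ)*(|α|+1)⌉ with hM
        apply hinf
        apply Set.Finite.subset (Set.Finite.prod (Set.finite_Icc (-M) M) (Set.finite_Icc 1 B))
        rintro ⟨P, Q⟩ ⟨hQ1', habs⟩
        have hQB : Q ≤ B := hno (P, Q) ⟨hQ1', habs⟩
        have hQR : (1:ℝ) ≤ (Q:ℝ) := by exact_mod_cast hQ1'
        have hQBR : (Q:ℝ) ≤ (B:ℝ) := by exact_mod_cast hQB
        have hrpow1 : (1:ℝ) ≤ ((Q:ℝ)) ^ ν := by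
          calc (1:ℝ) = ((Q:ℝ)) ^ (0:ℝ) := (Real.rpow_zero _).symm
            _ ≤ ((Q:ℝ)) ^ ν := Real.rpow_le_rpow_of_exponent_le hQR (by linarith)
        have habs1 : |α - (P:ℝ)/(Q:ℝ)| < 1 := lt_of_lt_of_le habs (by
          rw [div_le_one (by linarith)]; linarith)
        have hPabs : |(P:ℝ)| ≤ (Q:ℝ) * (|α| + 1) := by
          have h2 : |(P:ℝ)/(Q:ℝ)| ≤ |α| + 1 := by
            have := abs_sub_abs_le_abs_sub ((P:ℝ)/(Q:ℝ)) α
            rw [abs_sub_comm] at habs1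
            linarith [abs_sub_abs_le_abs_sub ((P:ℝ)/(Q:ℝ)) α, abs_sub_comm α ((P:ℝ)/(Q:ℝ)) ▸ habs1]
          rw [abs_div] at h2
          rw [abs_of_pos (by linarith : (0:ℝ) < (Q:ℝ))] at h2
          calc |(P:ℝ)| = |(P:ℝ)|/(Q:ℝ) * (Q:ℝ) := by field_simp
            _ ≤ (|α|+1) * (Q:ℝ) := by
                apply mul_le_mul_of_nonneg_right _ (by linarith)
                rw [div_le_iff₀ (by linarith)] at h2 ⊢
                linarith
            _ = (Q:ℝ) * (|α|+1) := by ring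
        have hPM : |P| ≤ M := by
          have hMR : (Q:ℝ) * (|α|+1) ≤ (M:ℝ) := by
            calc (Q:ℝ) * (|α|+1) ≤ (B:ℝ) * (|α|+1) := by nlinarith [abs_nonneg α]
              _ ≤ (M:ℝ) := Int.le_ceil _
          have : |(P:ℝ)| ≤ (M:ℝ) := hPabs.trans hMR
          rw [← Int.cast_abs] at this
          exact_mod_cast this
        constructor
        · simp only [Set.mem_Icc]; exact abs_le.mp hPM
        · simp only [Set.mem_Icc]; omega
      obtain ⟨⟨P, Q⟩, ⟨hQge, habs⟩, hQB⟩ := hBQ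
      simp only at hQge habs hQB
      obtain ⟨n, hn1, hn2⟩ := hfind Q hQge
      have hnN : N ≤ n := by
        by_contra hlt
        push_neg at hlt
        have : q (n+1) ≤ q N := hqmono' (n+1) N (by omega)
        have hqNB : q N ≤ B := by rw [hB]; exact le_max_left _ _
        omega
      -- real inequalities
      have hQRpos : (0:ℝ) < (Q:ℝ) := by exact_mod_cast lt_of_lt_of_le one_pos hQge
      have hQR1 : (1:ℝ) ≤ (Q:ℝ) := by exact_mod_cast hQge
      have hqle : (q n : ℝ) ≤ (Q:ℝ) := by exact_mod_cast hn1
      have hqgt : (Q:ℝ) < (q (n+1) : ℝ) := by exact_mod_cast hn2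
      -- the error bound chain
      have hbig : 1/(2*(q (n+1) : ℝ)) < (Q:ℝ) / ((Q:ℝ)) ^ ν := by
        have h1 := he_lb n
        have h2 := hbest n P Q hQge hn2
        have h3 : |(Q:ℝ)*α - (P:ℝ)| = (Q:ℝ) * |α - (P:ℝ)/(Q:ℝ)| := by
          have heq : (Q:ℝ)*α - (P:ℝ) = (Q:ℝ) * (α - (P:ℝ)/(Q:ℝ)) := by field_simp
          rw [heq, abs_mul, abs_of_pos hQRpos]
        have h4 : (Q:ℝ) * |α - (P:ℝ)/(Q:ℝ)| < (Q:ℝ) * (1/((Q:ℝ)) ^ ν) := by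
          apply mul_lt_mul_of_pos_left habs hQRpos
        calc 1/(2*(q (n+1) : ℝ)) < |(q n : ℝ)*α - (p n : ℝ)| := h1
          _ ≤ |(Q:ℝ)*α - (P:ℝ)| := h2
          _ = (Q:ℝ) * |α - (P:ℝ)/(Q:ℝ)| := h3
          _ < (Q:ℝ) * (1/((Q:ℝ)) ^ ν) := h4
          _ = (Q:ℝ) / ((Q:ℝ)) ^ ν := by ring
      have hrpos : (0:ℝ) < ((Q:ℝ)) ^ ν := Real.rpow_pos_of_pos hQRpos ν
      have hq1pos : (0:ℝ) < (q (n+1) : ℝ) := hQpos (n+1)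
      have hkey : ((Q:ℝ)) ^ ν < 2 * (q (n+1) : ℝ) * (Q:ℝ) := by
        rw [div_lt_div_iff₀ (by linarith) hrpos] at hbig
        linarith
      have hqc' : (q (n+1) : ℝ) < ((Q:ℝ)) ^ c := by
        calc (q (n+1) : ℝ) < ((q n : ℝ)) ^ c := hqc n hnN
          _ ≤ ((Q:ℝ)) ^ c := Real.rpow_le_rpow (hQpos n).le hqle hcpos.le
      have hkey2 : ((Q:ℝ)) ^ ν < 2 * ((Q:ℝ)) ^ (c + 1) := by
        calc ((Q:ℝ)) ^ ν < 2 * (q (n+1) : ℝ) * (Q:ℝ) := hkey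
          _ < 2 * ((Q:ℝ)) ^ c * (Q:ℝ) := by nlinarith
          _ = 2 * ((Q:ℝ)) ^ (c+1) := by rw [Real.rpow_add_one hQRpos.ne']; ring
      have hν_split : ν = (c + 1) + δ := by rw [hc, hδ]; ring
      have hkey3 : ((Q:ℝ)) ^ δ < 2 := by
        have h1 : ((Q:ℝ)) ^ ν = ((Q:ℝ)) ^ (c+1) * ((Q:ℝ)) ^ δ := by
          rw [← Real.rpow_add hQRpos, ← hν_split]
        rw [h1] at hkey2
        have h2 : (0:ℝ) < ((Q:ℝ)) ^ (c+1) := Real.rpow_pos_of_pos hQRpos _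
        nlinarith
      -- but Q > K forces Q ^ δ > 2
      have hQK : ((2:ℝ)) ^ (1/δ) < (Q:ℝ) := by
        have h1 : (K:ℝ) < (Q:ℝ) := by
          have : K ≤ B := le_max_right _ _
          exact_mod_cast lt_of_le_of_lt this hQB
        calc ((2:ℝ)) ^ (1/δ) ≤ (K:ℝ) := Int.le_ceil _
          _ < (Q:ℝ) := h1
      have hfinal : (2:ℝ) < ((Q:ℝ)) ^ δ := by
        have h2pos : (0:ℝ) < (2:ℝ) ^ (1/δ) := Real.rpow_pos_of_pos (by norm_num) _
        calc (2:ℝ) = ((2:ℝ) ^ (1/δ)) ^ δ := by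
              rw [← Real.rpow_mul (by norm_num : (0:ℝ) ≤ 2)]
              rw [one_div_mul_cancel hδpos.ne', Real.rpow_one]
          _ < ((Q:ℝ)) ^ δ := Real.rpow_lt_rpow h2pos.le hQK hδpos
      linarith
  -- lower bound
  have part2 : 1 + limsup (fun n => ENNReal.ofReal (Real.log (q (n + 1)) / Real.log (q n))) atTop
      ≤ irrExp α := by
      set r : ℕ → ℝ := fun n => Real.log (q (n + 1)) / Real.log (q n) with hrdef
      set L := limsup (fun n => ENNReal.ofReal (r n)) atTop with hL
      have hQpos : ∀ n, (0:ℝ) < (q n : ℝ) := fun n => by exact_mod_cast hq1' n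
      have hQ1 : ∀ n, (1:ℝ) ≤ (q n : ℝ) := fun n => by exact_mod_cast hq1' n
      have hlogpos : ∀ n, 2 ≤ n → 0 < Real.log (q n) := by
        intro n hn
        have : (2:ℝ) ≤ (q n : ℝ) := by exact_mod_cast hq2' n hn
        exact Real.log_pos (by linarith)
      -- key: membership of convergents
      have hmem : ∀ (ν : ℝ) (n : ℕ), ((q n : ℝ)) ^ ν ≤ (q n : ℝ) * (q (n+1) : ℝ) →
          (p n, q n) ∈ {pq : ℤ × ℤ | 1 ≤ pq.2 ∧ |α - (pq.1 : ℝ) / (pq.2 : ℝ)| < 1 / (pq.2 : ℝ) ^ ν} := by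
        intro ν n hle
        refine ⟨hq1' n, ?_⟩
        have h1 : (0:ℝ) < (q n : ℝ) ^ ν := Real.rpow_pos_of_pos (hQpos n) ν
        have h2 : 1/((q n : ℝ) * (q (n+1) : ℝ)) ≤ 1/((q n : ℝ) ^ ν) :=
          one_div_le_one_div_of_le h1 hle
        exact lt_of_lt_of_le (hflt n) h2
      have hinj : ∀ ν : ℝ, ∀ I : Set ℕ, I ⊆ {n | 2 ≤ n} → I.Infinite →
          (∀ n ∈ I, ((q n : ℝ)) ^ ν ≤ (q n : ℝ) * (q (n+1) : ℝ)) →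
          {pq : ℤ × ℤ | 1 ≤ pq.2 ∧ |α - (pq.1 : ℝ) / (pq.2 : ℝ)| < 1 / (pq.2 : ℝ) ^ ν}.Infinite := by
        intro ν I hIsub hIinf hI
        have hinjOn : Set.InjOn (fun n => ((p n, q n) : ℤ × ℤ)) I := by
          intro m hm n hn hmn
          simp only [Prod.mk.injEq] at hmn
          by_contra hne
          rcases Nat.lt_or_ge m n with h | h
          · exact absurd hmn.2 (hqlt m n (le_trans one_le_two (hIsub hm)) h).ne
          · have h' : n < m := by omega
            exact absurd hmn.2.symm (hqlt n m (le_trans one_le_two (hIsub hn)) h').ne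
        refine Set.Infinite.mono ?_ (hIinf.image hinjOn)
        rintro _ ⟨n, hn, rfl⟩
        exact hmem ν n (hI n hn)
      -- main argument
      by_contra hcon
      push_neg at hcon
      obtain ⟨d, hd1, hd2⟩ := exists_between hcon
      have hdne : d ≠ ⊤ := (hd2.trans_le le_top).ne
      set ν := d.toReal with hν
      have hdofReal : ENNReal.ofReal ν = d := ENNReal.ofReal_toReal hdne
      have hinfS : {pq : ℤ × ℤ | 1 ≤ pq.2 ∧ |α - (pq.1 : ℝ) / (pq.2 : ℝ)| < 1 / (pq.2 : ℝ) ^ ν}.Infinite := by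
        rcases le_or_gt ν 2 with hν2 | hν2
        · -- all n ≥ 2 work
          refine hinj ν {n | 2 ≤ n} le_rfl ?_ ?_
          · exact Set.infinite_of_not_bddAbove (by
              rw [not_bddAbove_iff]
              intro x; exact ⟨x + 2, by simp, by omega⟩)
          · intro n hn
            calc ((q n : ℝ)) ^ ν ≤ ((q n : ℝ)) ^ (2:ℝ) :=
                  Real.rpow_le_rpow_of_exponent_le (hQ1 n) hν2
              _ = (q n : ℝ) * (q n : ℝ) := by
                  rw [show (2:ℝ) = ((2:ℕ):ℝ) by norm_num, Real.rpow_natCast]; ring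
              _ ≤ (q n : ℝ) * (q (n+1) : ℝ) := by
                  have := hqmono n
                  have h1 : (q n : ℝ) ≤ (q (n+1) : ℝ) := by exact_mod_cast this
                  nlinarith [hQpos n]
        · -- use limsup
          have hsplit : ENNReal.ofReal ν = 1 + ENNReal.ofReal (ν - 1) := by
            rw [← ENNReal.ofReal_one, ← ENNReal.ofReal_add (by norm_num) (by linarith)]
            norm_num
          have hlt : ENNReal.ofReal (ν - 1) < L := by
            rw [hdofReal] at hsplit
            have : 1 + ENNReal.ofReal (ν - 1) < 1 + L := by rw [← hsplit]; exact hd2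
            exact (ENNReal.add_lt_add_iff_left (by norm_num)).mp this
          have hfreq : ∃ᶠ n in atTop, ENNReal.ofReal (ν - 1) < ENNReal.ofReal (r n) :=
            frequently_lt_of_lt_limsup (by isBoundedDefault) hlt
          have hfreq2 : ∃ᶠ n in atTop, (2 ≤ n ∧ ν - 1 < r n) := by
            refine (hfreq.and_eventually (eventually_ge_atTop 2)).mono ?_
            rintro n ⟨h1, h2⟩
            exact ⟨h2, (ENNReal.ofReal_lt_ofReal_iff_of_nonneg (by linarith)).mp h1⟩
          have hIinf : {n | 2 ≤ n ∧ ν - 1 < r n}.Infinite :=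
            Nat.frequently_atTop_iff_infinite.mp hfreq2
          refine hinj ν _ (fun n hn => hn.1) hIinf ?_
          rintro n ⟨hn2, hnr⟩
          have hlog := hlogpos n hn2
          have h1 : (ν - 1) * Real.log (q n) < Real.log (q (n+1)) := by
            rw [hrdef] at hnr
            calc (ν - 1) * Real.log (q n) < r n * Real.log (q n) := by nlinarith
              _ = Real.log (q (n+1)) := by simp only [hrdef]; field_simp
          have h2 : ((q n : ℝ)) ^ (ν - 1) < (q (n+1) : ℝ) := by
            rw [Real.rpow_def_of_pos (hQpos n)]
            calc Real.exp (Real.log (q n) * (ν - 1)) < Real.exp (Real.log (q (n+1))) := by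
                  apply Real.exp_lt_exp.mpr; linarith
              _ = (q (n+1) : ℝ) := Real.exp_log (hQpos (n+1))
          calc ((q n : ℝ)) ^ ν = ((q n : ℝ)) ^ (ν - 1) * ((q n : ℝ)) ^ (1:ℝ) := by
                rw [← Real.rpow_add (hQpos n)]; norm_num
            _ = ((q n : ℝ)) ^ (ν - 1) * (q n : ℝ) := by rw [Real.rpow_one]
            _ ≤ (q (n+1) : ℝ) * (q n : ℝ) := by
                have := Real.rpow_nonneg (hQpos n).le (ν - 1)
                nlinarith [hQpos n]
            _ = (q n : ℝ) * (q (n+1) : ℝ) := by ring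
      have : d ≤ irrExp α := le_sSup ⟨ν, hdofReal.symm, hinfS⟩
      exact absurd (this.trans_lt hd1) (lt_irrefl d)
  -- the two limsups
  have heq2 : limsup (fun n => ENNReal.ofReal (Real.log (q (n + 1)) / Real.log (q n))) atTop
      = 1 + limsup (fun n => ENNReal.ofReal (Real.log (a (n + 1)) / Real.log (q n))) atTop := by
      set r : ℕ → ℝ := fun n => Real.log (q (n + 1)) / Real.log (q n) with hrdef
      set s : ℕ → ℝ := fun n => Real.log (a (n + 1)) / Real.log (q n) with hsdef
      have hlogpos : ∀ n, 2 ≤ n → 0 < Real.log (q n) := by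
        intro n hn
        have : (2:ℝ) ≤ (q n : ℝ) := by exact_mod_cast hq2' n hn
        exact Real.log_pos (by linarith)
      have hsand : ∀ n, 2 ≤ n → s n + 1 ≤ r n ∧ r n ≤ s n + 1 + Real.log 2 / Real.log (q n) := by
        intro n hn
        obtain ⟨m, rfl⟩ : ∃ m, n = m + 2 := ⟨n - 2, by omega⟩
        set n := m + 2
        have hrec : q (n+1) = a (n+1) * q n + q (m+1) := hq (m+1)
        have haR : (1:ℝ) ≤ (a (n+1) : ℝ) := by exact_mod_cast ha (n+1) (by omega)
        have hqR : (2:ℝ) ≤ (q n : ℝ) := by exact_mod_cast hq2' n (by omega)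
        have hqm1 : (1:ℝ) ≤ (q (m+1) : ℝ) := by exact_mod_cast hq1' (m+1)
        have hqmle : (q (m+1) : ℝ) ≤ (q n : ℝ) := by exact_mod_cast hqmono (m+1)
        have hrecR : (q (n+1) : ℝ) = (a (n+1) : ℝ) * (q n : ℝ) + (q (m+1) : ℝ) := by
          exact_mod_cast congrArg (Int.cast : ℤ → ℝ) hrec
        have hlow : (a (n+1) : ℝ) * (q n : ℝ) ≤ (q (n+1) : ℝ) := by rw [hrecR]; linarith
        have hhigh : (q (n+1) : ℝ) ≤ 2 * ((a (n+1) : ℝ) * (q n : ℝ)) := by rw [hrecR]; nlinarith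
        have hapos : (0:ℝ) < (a (n+1) : ℝ) := by linarith
        have hqpos : (0:ℝ) < (q n : ℝ) := by linarith
        have hlog : 0 < Real.log (q n) := hlogpos n (by omega)
        have hlog1 : Real.log ((a (n+1) : ℝ)) + Real.log ((q n : ℝ)) ≤ Real.log ((q (n+1) : ℝ)) := by
          rw [← Real.log_mul hapos.ne' hqpos.ne']
          exact Real.log_le_log (by positivity) hlow
        have hlog2 : Real.log ((q (n+1) : ℝ)) ≤ Real.log 2 + Real.log ((a (n+1) : ℝ)) + Real.log ((q n : ℝ)) := by
          have : Real.log (2 * ((a (n+1) : ℝ) * (q n : ℝ)))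
              = Real.log 2 + Real.log ((a (n+1) : ℝ)) + Real.log ((q n : ℝ)) := by
            rw [Real.log_mul (by norm_num) (by positivity), Real.log_mul hapos.ne' hqpos.ne']
            ring
          rw [← this]
          have hq1pos : (0:ℝ) < (q (n+1) : ℝ) := by exact_mod_cast hq1' (n+1)
          exact Real.log_le_log hq1pos hhigh
        constructor
        · have := (div_le_div_iff_of_pos_right hlog).mpr hlog1
          rw [add_div, div_self hlog.ne'] at this
          simpa [hrdef, hsdef] using this
        · have := (div_le_div_iff_of_pos_right hlog).mpr hlog2
          rw [add_div, add_div, div_self hlog.ne'] at this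
          simp only [hrdef, hsdef]
          calc Real.log (q (n+1)) / Real.log (q n)
              ≤ Real.log 2 / Real.log (q n) + Real.log (a (n+1)) / Real.log (q n) + 1 := this
            _ = _ := by ring
      have hs0 : ∀ n, 2 ≤ n → 0 ≤ s n := by
        intro n hn
        have haR : (1:ℝ) ≤ (a (n+1) : ℝ) := by exact_mod_cast ha (n+1) (by omega)
        have := Real.log_nonneg haR
        have := (hlogpos n hn)
        exact div_nonneg ‹0 ≤ Real.log (a (n+1) : ℝ)› this.le
      -- ≥ direction
      apply le_antisymm
      · -- limsup r ≤ 1 + limsup s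
        set S := limsup (fun n => ENNReal.ofReal (s n)) atTop with hS
        rcases eq_or_ne S ⊤ with hStop | hSne
        · rw [hStop]; simp
        apply ENNReal.le_of_forall_pos_le_add
        intro ε hε _
        have h2 : Tendsto (fun n => Real.log 2 / Real.log (q n)) atTop (nhds 0) :=
          tendsto_const_nhds.div_atTop htendlog
        have h3 : ∀ᶠ n in atTop, Real.log 2 / Real.log (q n) < (ε:ℝ) := by
          apply Tendsto.eventually_lt_const (by exact_mod_cast hε) h2
        have h4 : ∀ᶠ n in atTop, (2:ℕ) ≤ n := eventually_ge_atTop 2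
        have h5 : ∀ᶠ n in atTop, ENNReal.ofReal (r n) ≤ ENNReal.ofReal (s n) + (1 + (ε:ℝ≥0∞)) := by
          filter_upwards [h3, h4] with n h3n h4n
          have h6 := (hsand n h4n).2
          have h7 : r n ≤ s n + 1 + (ε:ℝ) := by linarith
          calc ENNReal.ofReal (r n) ≤ ENNReal.ofReal (s n + 1 + (ε:ℝ)) := ENNReal.ofReal_le_ofReal h7
            _ = ENNReal.ofReal (s n) + 1 + (ε:ℝ≥0∞) := by
                rw [ENNReal.ofReal_add (by linarith [hs0 n h4n]) (by positivity),
                  ENNReal.ofReal_add (hs0 n h4n) (by norm_num)]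
                simp [ENNReal.ofReal_coe_nnreal]
            _ = ENNReal.ofReal (s n) + (1 + (ε:ℝ≥0∞)) := by ring
        calc limsup (fun n => ENNReal.ofReal (r n)) atTop
            ≤ limsup (fun n => ENNReal.ofReal (s n) + (1 + (ε:ℝ≥0∞))) atTop := limsup_le_limsup h5
          _ = S + (1 + (ε:ℝ≥0∞)) := limsup_add_const_ennreal' _ _
          _ = 1 + S + (ε:ℝ≥0∞) := by ring
      · -- 1 + limsup s ≤ limsup r
        have h5 : ∀ᶠ n in atTop, ENNReal.ofReal (s n) + 1 ≤ ENNReal.ofReal (r n) := by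
          filter_upwards [eventually_ge_atTop 2] with n hn
          have h6 := (hsand n hn).1
          calc ENNReal.ofReal (s n) + 1 = ENNReal.ofReal (s n + 1) := by
                rw [ENNReal.ofReal_add (hs0 n hn) (by norm_num)]; norm_num
            _ ≤ ENNReal.ofReal (r n) := ENNReal.ofReal_le_ofReal h6
        calc 1 + limsup (fun n => ENNReal.ofReal (s n)) atTop
            = limsup (fun n => ENNReal.ofReal (s n) + 1) atTop := by
              rw [limsup_add_const_ennreal']; ring
          _ ≤ limsup (fun n => ENNReal.ofReal (r n)) atTop := limsup_le_limsup h5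
  have hfirst : irrExp α =
      1 + limsup (fun n => ENNReal.ofReal (Real.log (q (n + 1)) / Real.log (q n))) atTop :=
    le_antisymm part1 part2
  refine ⟨hfirst, ?_⟩
  rw [hfirst, heq2, ← add_assoc, one_add_one_eq_two]
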